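/- There exists a constant C > 0, independent of h, the center of K, u and w, such that for every h > 0, every square K of half side h, every function u of class C⁴ on a neighborhood of K, and every w in the shape space P(K) = P₂(K) + span{x₁³, x₂³}, one has |∫_K ∇(Δu) · ∇(w − I_K w) dx₁dx₂| ≤ C h² |u|_{H⁴(K)} |w|_{H²(K)}. -/

import Mathlib

open MeasureTheory

/-- Partial derivative in the first variable of a curried function on `ℝ²`. -/
noncomputable def pdx (f : ℝ → ℝ → ℝ) : ℝ → ℝ → ℝ := fun x y => deriv (fun t => f t y) x

/-- Partial derivative in the second variable of a curried function on `ℝ²`. -/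
noncomputable def pdy (f : ℝ → ℝ → ℝ) : ℝ → ℝ → ℝ := fun x y => deriv (fun t => f x t) y

/-- Membership in the shape space `P(K) = P₂(K) + span{x₁³, x₂³}` of the two-dimensional
rectangular Morley element. -/
def MorleyShape2 (w : ℝ → ℝ → ℝ) : Prop :=
  ∃ c0 c1 c2 c3 c4 c5 c6 c7 : ℝ, ∀ x y : ℝ,
    w x y = c0 + c1 * x + c2 * y + c3 * x ^ 2 + c4 * (x * y) + c5 * y ^ 2
      + c6 * x ^ 3 + c7 * y ^ 3

/-- The bilinear (Q₁) interpolation operator on the square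
`K = [x1c-h, x1c+h] × [x2c-h, x2c+h]`: the unique element of `span{1, x₁, x₂, x₁x₂}`
agreeing with `w` at the four vertices of `K`. -/
noncomputable def IK (w : ℝ → ℝ → ℝ) (x1c x2c h : ℝ) : ℝ → ℝ → ℝ := fun x y =>
  (w (x1c + h) (x2c + h) * ((1 + (x - x1c) / h) * (1 + (y - x2c) / h))
    + w (x1c + h) (x2c - h) * ((1 + (x - x1c) / h) * (1 - (y - x2c) / h))
    + w (x1c - h) (x2c + h) * ((1 - (x - x1c) / h) * (1 + (y - x2c) / h))
    + w (x1c - h) (x2c - h) * ((1 - (x - x1c) / h) * (1 - (y - x2c) / h))) / 4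

/-- The `H²` seminorm of `v` on the rectangle `[a,b] × [c,d]`, each ordering of mixed
partial derivatives counted. -/
noncomputable def semiH2R (v : ℝ → ℝ → ℝ) (a b c d : ℝ) : ℝ :=
  Real.sqrt (∫ x in a..b, ∫ y in c..d,
    (pdx (pdx v) x y) ^ 2 + (pdx (pdy v) x y) ^ 2 + (pdy (pdx v) x y) ^ 2
      + (pdy (pdy v) x y) ^ 2)

/-- The `H⁴` seminorm of `u` on the rectangle `[a,b] × [c,d]`, each ordering of mixed
partial derivatives counted (hence the binomial coefficients). -/
noncomputable def semiH4R (u : ℝ → ℝ → ℝ) (a b c d : ℝ) : ℝ :=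
  Real.sqrt (∫ x in a..b, ∫ y in c..d,
    (pdx (pdx (pdx (pdx u))) x y) ^ 2 + 4 * (pdx (pdx (pdx (pdy u))) x y) ^ 2
      + 6 * (pdx (pdx (pdy (pdy u))) x y) ^ 2 + 4 * (pdx (pdy (pdy (pdy u))) x y) ^ 2
      + (pdy (pdy (pdy (pdy u))) x y) ^ 2)

/-- `u` is of class `C⁴` on a neighborhood of the rectangle `[a,b] × [c,d]`. -/
def C4Near (u : ℝ → ℝ → ℝ) (a b c d : ℝ) : Prop :=
  ∃ U : Set (ℝ × ℝ), IsOpen U ∧ Set.Icc a b ×ˢ Set.Icc c d ⊆ U ∧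
    ContDiffOn ℝ 4 (fun p : ℝ × ℝ => u p.1 p.2) U


open Set

noncomputable def P1 (F : ℝ × ℝ → ℝ) : ℝ × ℝ → ℝ := fun p => fderiv ℝ F p (1, 0)
noncomputable def P2 (F : ℝ × ℝ → ℝ) : ℝ × ℝ → ℝ := fun p => fderiv ℝ F p (0, 1)

lemma hasDerivAt_slice1 {F : ℝ × ℝ → ℝ} {x y : ℝ} (hF : DifferentiableAt ℝ F (x, y)) :
    HasDerivAt (fun t => F (t, y)) (P1 F (x, y)) x :=
  hF.hasFDerivAt.comp_hasDerivAt x ((hasDerivAt_id x).prodMk (hasDerivAt_const x y))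

lemma hasDerivAt_slice2 {F : ℝ × ℝ → ℝ} {x y : ℝ} (hF : DifferentiableAt ℝ F (x, y)) :
    HasDerivAt (fun t => F (x, t)) (P2 F (x, y)) y :=
  hF.hasFDerivAt.comp_hasDerivAt y ((hasDerivAt_const y x).prodMk (hasDerivAt_id y))

-- smoothness of P1 F on open set
lemma P1_contDiffOn {F : ℝ × ℝ → ℝ} {U : Set (ℝ × ℝ)} {m n : ℕ} (hU : IsOpen U)
    (hF : ContDiffOn ℝ n F U) (hmn : m + 1 ≤ n) : ContDiffOn ℝ m (P1 F) U := by
  have h1 : ContDiffOn ℝ m (fderiv ℝ F) U := hF.fderiv_of_isOpen hU (by exact_mod_cast hmn)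
  exact h1.clm_apply contDiffOn_const

lemma P2_contDiffOn {F : ℝ × ℝ → ℝ} {U : Set (ℝ × ℝ)} {m n : ℕ} (hU : IsOpen U)
    (hF : ContDiffOn ℝ n F U) (hmn : m + 1 ≤ n) : ContDiffOn ℝ m (P2 F) U := by
  have h1 : ContDiffOn ℝ m (fderiv ℝ F) U := hF.fderiv_of_isOpen hU (by exact_mod_cast hmn)
  exact h1.clm_apply contDiffOn_const

-- Schwarz
lemma P_swap {F : ℝ × ℝ → ℝ} {U : Set (ℝ × ℝ)} {n : ℕ} (hU : IsOpen U)
    (hF : ContDiffOn ℝ n F U) (hn : 2 ≤ n) {p : ℝ × ℝ} (hp : p ∈ U) :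
    P1 (P2 F) p = P2 (P1 F) p := by
  have hca : ContDiffAt ℝ n F p := hF.contDiffAt (hU.mem_nhds hp)
  have hsym : IsSymmSndFDerivAt ℝ F p := hca.isSymmSndFDerivAt (by simp only [minSmoothness_of_isRCLikeNormedField]; exact_mod_cast hn)
  have hdiff : DifferentiableAt ℝ (fderiv ℝ F) p := by
    have h1 : ContDiffOn ℝ 1 (fderiv ℝ F) U := hF.fderiv_of_isOpen hU (by exact_mod_cast hn)
    exact (h1.differentiableOn one_ne_zero).differentiableAt (hU.mem_nhds hp)
  have key : ∀ v w : ℝ × ℝ, fderiv ℝ (fun q => fderiv ℝ F q v) p w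
      = fderiv ℝ (fderiv ℝ F) p w v := by
    intro v w
    have := (hdiff.hasFDerivAt.clm_apply (hasFDerivAt_const v p)).fderiv
    rw [this]
    simp
  have l1 : P1 (P2 F) p = fderiv ℝ (fun q => fderiv ℝ F q (0, 1)) p (1, 0) := rfl
  have l2 : P2 (P1 F) p = fderiv ℝ (fun q => fderiv ℝ F q (1, 0)) p (0, 1) := rfl
  rw [l1, l2, key, key]
  exact hsym _ _

lemma P1_congr {X Y : ℝ × ℝ → ℝ} {U : Set (ℝ × ℝ)} (hU : IsOpen U)
    (hXY : ∀ p ∈ U, X p = Y p) {p : ℝ × ℝ} (hp : p ∈ U) : P1 X p = P1 Y p := by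
  have hev : X =ᶠ[nhds p] Y := Filter.eventuallyEq_of_mem (hU.mem_nhds hp) hXY
  simp only [P1]
  rw [hev.fderiv_eq]

lemma P2_congr {X Y : ℝ × ℝ → ℝ} {U : Set (ℝ × ℝ)} (hU : IsOpen U)
    (hXY : ∀ p ∈ U, X p = Y p) {p : ℝ × ℝ} (hp : p ∈ U) : P2 X p = P2 Y p := by
  have hev : X =ᶠ[nhds p] Y := Filter.eventuallyEq_of_mem (hU.mem_nhds hp) hXY
  simp only [P2]
  rw [hev.fderiv_eq]

lemma P1_add {X Y : ℝ × ℝ → ℝ} {p : ℝ × ℝ} (hX : DifferentiableAt ℝ X p)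
    (hY : DifferentiableAt ℝ Y p) : P1 (fun q => X q + Y q) p = P1 X p + P1 Y p := by
  simp [P1, fderiv_fun_add hX hY]

lemma P2_add {X Y : ℝ × ℝ → ℝ} {p : ℝ × ℝ} (hX : DifferentiableAt ℝ X p)
    (hY : DifferentiableAt ℝ Y p) : P2 (fun q => X q + Y q) p = P2 X p + P2 Y p := by
  simp [P2, fderiv_fun_add hX hY]


lemma pdx_eqP {f : ℝ → ℝ → ℝ} {X : ℝ × ℝ → ℝ} {U : Set (ℝ × ℝ)} (hU : IsOpen U)
    (hfX : ∀ p ∈ U, f p.1 p.2 = X p) (hX : DifferentiableOn ℝ X U) {x y : ℝ}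
    (hp : (x, y) ∈ U) : pdx f x y = P1 X (x, y) := by
  have hXd : DifferentiableAt ℝ X (x, y) := hX.differentiableAt (hU.mem_nhds hp)
  have hopen : IsOpen {t : ℝ | (t, y) ∈ U} := hU.preimage (by fun_prop)
  have hev : (fun t => f t y) =ᶠ[nhds x] (fun t => X (t, y)) := by
    filter_upwards [hopen.mem_nhds hp] with t ht using hfX (t, y) ht
  show deriv (fun t => f t y) x = _
  rw [hev.deriv_eq]
  exact (hasDerivAt_slice1 hXd).deriv

lemma pdy_eqP {f : ℝ → ℝ → ℝ} {X : ℝ × ℝ → ℝ} {U : Set (ℝ × ℝ)} (hU : IsOpen U)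
    (hfX : ∀ p ∈ U, f p.1 p.2 = X p) (hX : DifferentiableOn ℝ X U) {x y : ℝ}
    (hp : (x, y) ∈ U) : pdy f x y = P2 X (x, y) := by
  have hXd : DifferentiableAt ℝ X (x, y) := hX.differentiableAt (hU.mem_nhds hp)
  have hopen : IsOpen {t : ℝ | (x, t) ∈ U} := hU.preimage (by fun_prop)
  have hev : (fun t => f x t) =ᶠ[nhds y] (fun t => X (x, t)) := by
    filter_upwards [hopen.mem_nhds hp] with t ht using hfX (x, t) ht
  show deriv (fun t => f x t) y = _
  rw [hev.deriv_eq]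
  exact (hasDerivAt_slice2 hXd).deriv

noncomputable def Fu (u : ℝ → ℝ → ℝ) : ℝ × ℝ → ℝ := fun p => u p.1 p.2
noncomputable def SL (u : ℝ → ℝ → ℝ) : ℝ × ℝ → ℝ :=
  fun p => P1 (P1 (Fu u)) p + P2 (P2 (Fu u)) p
noncomputable def gg1 (u : ℝ → ℝ → ℝ) : ℝ × ℝ → ℝ := P1 (SL u)
noncomputable def gg2 (u : ℝ → ℝ → ℝ) : ℝ × ℝ → ℝ := P2 (SL u)
noncomputable def DD1 (u : ℝ → ℝ → ℝ) : ℝ × ℝ → ℝ := P1 (gg1 u)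
noncomputable def DD2 (u : ℝ → ℝ → ℝ) : ℝ × ℝ → ℝ := P2 (gg2 u)
noncomputable def H4P (u : ℝ → ℝ → ℝ) : ℝ × ℝ → ℝ := fun p =>
  (P1 (P1 (P1 (P1 (Fu u)))) p) ^ 2 + 4 * (P1 (P1 (P1 (P2 (Fu u)))) p) ^ 2
    + 6 * (P1 (P1 (P2 (P2 (Fu u)))) p) ^ 2 + 4 * (P1 (P2 (P2 (P2 (Fu u)))) p) ^ 2
    + (P2 (P2 (P2 (P2 (Fu u)))) p) ^ 2

section IdentBlock
variable {u : ℝ → ℝ → ℝ} {U : Set (ℝ × ℝ)}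

lemma smooth_block (hU : IsOpen U) (hF : ContDiffOn ℝ 4 (Fu u) U) :
    ContDiffOn ℝ 2 (SL u) U ∧ ContDiffOn ℝ 1 (gg1 u) U ∧ ContDiffOn ℝ 1 (gg2 u) U ∧
      ContinuousOn (DD1 u) U ∧ ContinuousOn (DD2 u) U ∧ ContinuousOn (H4P u) U := by
  have hF4 : ContDiffOn ℝ (4 : ℕ) (Fu u) U := by exact_mod_cast hF
  have h1 := P1_contDiffOn (m := 3) hU hF4 (by norm_num)
  have h2 := P2_contDiffOn (m := 3) hU hF4 (by norm_num)
  have h11 := P1_contDiffOn (m := 2) hU h1 (by norm_num)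
  have h22 := P2_contDiffOn (m := 2) hU h2 (by norm_num)
  have hSL : ContDiffOn ℝ (2 : ℕ) (SL u) U := h11.add h22
  have hg1 := P1_contDiffOn (m := 1) hU hSL (by norm_num)
  have hg2 := P2_contDiffOn (m := 1) hU hSL (by norm_num)
  have hD1 := P1_contDiffOn (m := 0) hU hg1 (by norm_num)
  have hD2 := P2_contDiffOn (m := 0) hU hg2 (by norm_num)
  have hH4 : ContinuousOn (H4P u) U := by
    have c1 := (P1_contDiffOn (m := 0) hU (P1_contDiffOn (m := 1) hU h11 (by norm_num))
      (by norm_num)).continuousOn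
    have c2 := (P1_contDiffOn (m := 0) hU (P1_contDiffOn (m := 1) hU
      (P1_contDiffOn (m := 2) hU h2 (by norm_num)) (by norm_num)) (by norm_num)).continuousOn
    have c3 := (P1_contDiffOn (m := 0) hU (P1_contDiffOn (m := 1) hU h22 (by norm_num))
      (by norm_num)).continuousOn
    have c4 := (P1_contDiffOn (m := 0) hU (P2_contDiffOn (m := 1) hU h22 (by norm_num))
      (by norm_num)).continuousOn
    have c5 := (P2_contDiffOn (m := 0) hU (P2_contDiffOn (m := 1) hU h22 (by norm_num))
      (by norm_num)).continuousOn
    exact (((((c1.pow 2).add (continuousOn_const.mul (c2.pow 2))).add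
      (continuousOn_const.mul (c3.pow 2))).add
      (continuousOn_const.mul (c4.pow 2))).add (c5.pow 2))
  exact ⟨by exact_mod_cast hSL, by exact_mod_cast hg1, by exact_mod_cast hg2,
    hD1.continuousOn, hD2.continuousOn, hH4⟩


lemma ident_all (hU : IsOpen U) (hF : ContDiffOn ℝ 4 (Fu u) U) :
    (∀ x y, (x, y) ∈ U →
      pdx (fun a b => pdx (pdx u) a b + pdy (pdy u) a b) x y = gg1 u (x, y)) ∧
    (∀ x y, (x, y) ∈ U →
      pdy (fun a b => pdx (pdx u) a b + pdy (pdy u) a b) x y = gg2 u (x, y)) ∧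
    (∀ x y, (x, y) ∈ U →
      (pdx (pdx (pdx (pdx u))) x y) ^ 2 + 4 * (pdx (pdx (pdx (pdy u))) x y) ^ 2
        + 6 * (pdx (pdx (pdy (pdy u))) x y) ^ 2 + 4 * (pdx (pdy (pdy (pdy u))) x y) ^ 2
        + (pdy (pdy (pdy (pdy u))) x y) ^ 2 = H4P u (x, y)) ∧
    (∀ x y, (x, y) ∈ U → HasDerivAt (fun s => gg1 u (s, y)) (DD1 u (x, y)) x) ∧
    (∀ x y, (x, y) ∈ U → HasDerivAt (fun t => gg2 u (x, t)) (DD2 u (x, y)) y) ∧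
    (∀ p ∈ U, (DD1 u p) ^ 2 ≤ 2 * H4P u p) ∧
    (∀ p ∈ U, (DD2 u p) ^ 2 ≤ 2 * H4P u p) := by
  have hF4 : ContDiffOn ℝ (4 : ℕ) (Fu u) U := by exact_mod_cast hF
  have h1 := P1_contDiffOn (m := 3) hU hF4 (by norm_num)
  have h2 := P2_contDiffOn (m := 3) hU hF4 (by norm_num)
  have h11 := P1_contDiffOn (m := 2) hU h1 (by norm_num)
  have h12 := P1_contDiffOn (m := 2) hU h2 (by norm_num)
  have h22 := P2_contDiffOn (m := 2) hU h2 (by norm_num)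
  have h111 := P1_contDiffOn (m := 1) hU h11 (by norm_num)
  have h112 := P1_contDiffOn (m := 1) hU h12 (by norm_num)
  have h122 := P1_contDiffOn (m := 1) hU h22 (by norm_num)
  have h222 := P2_contDiffOn (m := 1) hU h22 (by norm_num)
  have hSL : ContDiffOn ℝ (2 : ℕ) (SL u) U := h11.add h22
  have hg1 := P1_contDiffOn (m := 1) hU hSL (by norm_num)
  have hg2 := P2_contDiffOn (m := 1) hU hSL (by norm_num)
  have dF : DifferentiableOn ℝ (Fu u) U := hF4.differentiableOn (by norm_num)
  have d1 : DifferentiableOn ℝ (P1 (Fu u)) U := h1.differentiableOn (by norm_num)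
  have d2 : DifferentiableOn ℝ (P2 (Fu u)) U := h2.differentiableOn (by norm_num)
  have d11 : DifferentiableOn ℝ (P1 (P1 (Fu u))) U := h11.differentiableOn (by norm_num)
  have d12 : DifferentiableOn ℝ (P1 (P2 (Fu u))) U := h12.differentiableOn (by norm_num)
  have d22 : DifferentiableOn ℝ (P2 (P2 (Fu u))) U := h22.differentiableOn (by norm_num)
  have d111 : DifferentiableOn ℝ (P1 (P1 (P1 (Fu u)))) U := h111.differentiableOn (by norm_num)
  have d112 : DifferentiableOn ℝ (P1 (P1 (P2 (Fu u)))) U := h112.differentiableOn (by norm_num)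
  have d122 : DifferentiableOn ℝ (P1 (P2 (P2 (Fu u)))) U := h122.differentiableOn (by norm_num)
  have d222 : DifferentiableOn ℝ (P2 (P2 (P2 (Fu u)))) U := h222.differentiableOn (by norm_num)
  have dSL : DifferentiableOn ℝ (SL u) U := hSL.differentiableOn (by norm_num)
  have dg1 : DifferentiableOn ℝ (gg1 u) U := hg1.differentiableOn (by norm_num)
  have dg2 : DifferentiableOn ℝ (gg2 u) U := hg2.differentiableOn (by norm_num)
  -- curried identities
  have e0 : ∀ p ∈ U, u p.1 p.2 = Fu u p := fun _ _ => rfl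
  have i1 : ∀ p ∈ U, pdx u p.1 p.2 = P1 (Fu u) p := fun p hp => pdx_eqP hU e0 dF hp
  have i2 : ∀ p ∈ U, pdy u p.1 p.2 = P2 (Fu u) p := fun p hp => pdy_eqP hU e0 dF hp
  have i11 : ∀ p ∈ U, pdx (pdx u) p.1 p.2 = P1 (P1 (Fu u)) p := fun p hp =>
    pdx_eqP hU i1 d1 hp
  have i12 : ∀ p ∈ U, pdx (pdy u) p.1 p.2 = P1 (P2 (Fu u)) p := fun p hp =>
    pdx_eqP hU i2 d2 hp
  have i22 : ∀ p ∈ U, pdy (pdy u) p.1 p.2 = P2 (P2 (Fu u)) p := fun p hp =>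
    pdy_eqP hU i2 d2 hp
  have i111 : ∀ p ∈ U, pdx (pdx (pdx u)) p.1 p.2 = P1 (P1 (P1 (Fu u))) p := fun p hp =>
    pdx_eqP hU i11 d11 hp
  have i112 : ∀ p ∈ U, pdx (pdx (pdy u)) p.1 p.2 = P1 (P1 (P2 (Fu u))) p := fun p hp =>
    pdx_eqP hU i12 d12 hp
  have i122 : ∀ p ∈ U, pdx (pdy (pdy u)) p.1 p.2 = P1 (P2 (P2 (Fu u))) p := fun p hp =>
    pdx_eqP hU i22 d22 hp
  have i222 : ∀ p ∈ U, pdy (pdy (pdy u)) p.1 p.2 = P2 (P2 (P2 (Fu u))) p := fun p hp =>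
    pdy_eqP hU i22 d22 hp
  have i1111 : ∀ p ∈ U, pdx (pdx (pdx (pdx u))) p.1 p.2 = P1 (P1 (P1 (P1 (Fu u)))) p :=
    fun p hp => pdx_eqP hU i111 d111 hp
  have i1112 : ∀ p ∈ U, pdx (pdx (pdx (pdy u))) p.1 p.2 = P1 (P1 (P1 (P2 (Fu u)))) p :=
    fun p hp => pdx_eqP hU i112 d112 hp
  have i1122 : ∀ p ∈ U, pdx (pdx (pdy (pdy u))) p.1 p.2 = P1 (P1 (P2 (P2 (Fu u)))) p :=
    fun p hp => pdx_eqP hU i122 d122 hp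
  have i1222 : ∀ p ∈ U, pdx (pdy (pdy (pdy u))) p.1 p.2 = P1 (P2 (P2 (P2 (Fu u)))) p :=
    fun p hp => pdx_eqP hU i222 d222 hp
  have i2222 : ∀ p ∈ U, pdy (pdy (pdy (pdy u))) p.1 p.2 = P2 (P2 (P2 (P2 (Fu u)))) p :=
    fun p hp => pdy_eqP hU i222 d222 hp
  have iSL : ∀ p ∈ U, (fun a b => pdx (pdx u) a b + pdy (pdy u) a b) p.1 p.2 = SL u p := by
    intro p hp
    show pdx (pdx u) p.1 p.2 + pdy (pdy u) p.1 p.2 = _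
    rw [i11 p hp, i22 p hp]
    rfl
  have if1 : ∀ x y, (x, y) ∈ U →
      pdx (fun a b => pdx (pdx u) a b + pdy (pdy u) a b) x y = gg1 u (x, y) :=
    fun x y hp => pdx_eqP hU iSL dSL hp
  have if2 : ∀ x y, (x, y) ∈ U →
      pdy (fun a b => pdx (pdx u) a b + pdy (pdy u) a b) x y = gg2 u (x, y) :=
    fun x y hp => pdy_eqP hU iSL dSL hp
  -- D decomposition
  have hg1dec : ∀ p ∈ U, gg1 u p = P1 (P1 (P1 (Fu u))) p + P1 (P2 (P2 (Fu u))) p := by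
    intro p hp
    exact P1_add (d11.differentiableAt (hU.mem_nhds hp)) (d22.differentiableAt (hU.mem_nhds hp))
  have hg2dec : ∀ p ∈ U, gg2 u p = P2 (P1 (P1 (Fu u))) p + P2 (P2 (P2 (Fu u))) p := by
    intro p hp
    exact P2_add (d11.differentiableAt (hU.mem_nhds hp)) (d22.differentiableAt (hU.mem_nhds hp))
  have hD1dec : ∀ p ∈ U, DD1 u p
      = P1 (P1 (P1 (P1 (Fu u)))) p + P1 (P1 (P2 (P2 (Fu u)))) p := by
    intro p hp
    have e : DD1 u p = P1 (fun q => P1 (P1 (P1 (Fu u))) q + P1 (P2 (P2 (Fu u))) q) p :=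
      P1_congr hU hg1dec hp
    rw [show DD1 u p = P1 (gg1 u) p from rfl] at e
    rw [show DD1 u p = P1 (gg1 u) p from rfl, e,
      P1_add (d111.differentiableAt (hU.mem_nhds hp)) (d122.differentiableAt (hU.mem_nhds hp))]
  -- Schwarz chain for DD2
  have a1 : ∀ p ∈ U, P2 (P1 (Fu u)) p = P1 (P2 (Fu u)) p := fun p hp =>
    (P_swap (n := 4) hU hF4 (by norm_num) hp).symm
  have a2 : ∀ p ∈ U, P2 (P1 (P1 (Fu u))) p = P1 (P2 (P1 (Fu u))) p := fun p hp =>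
    (P_swap (n := 3) hU h1 (by norm_num) hp).symm
  have a6 : ∀ p ∈ U, P2 (P2 (P1 (Fu u))) p = P1 (P2 (P2 (Fu u))) p := by
    intro p hp
    calc P2 (P2 (P1 (Fu u))) p = P2 (P1 (P2 (Fu u))) p := P2_congr hU a1 hp
      _ = P1 (P2 (P2 (Fu u))) p := (P_swap (n := 3) hU h2 (by norm_num) hp).symm
  have schwarz4 : ∀ p ∈ U, P2 (P2 (P1 (P1 (Fu u)))) p = P1 (P1 (P2 (P2 (Fu u)))) p := by
    intro p hp
    calc P2 (P2 (P1 (P1 (Fu u)))) p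
        = P2 (P1 (P2 (P1 (Fu u)))) p := P2_congr hU a2 hp
      _ = P1 (P2 (P2 (P1 (Fu u)))) p :=
          (P_swap (n := 2) hU (P2_contDiffOn (m := 2) hU h1 (by norm_num)) (by norm_num) hp).symm
      _ = P1 (P1 (P2 (P2 (Fu u)))) p := P1_congr hU a6 hp
  have hD2dec : ∀ p ∈ U, DD2 u p
      = P1 (P1 (P2 (P2 (Fu u)))) p + P2 (P2 (P2 (P2 (Fu u)))) p := by
    intro p hp
    have e : DD2 u p = P2 (fun q => P2 (P1 (P1 (Fu u))) q + P2 (P2 (P2 (Fu u))) q) p :=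
      P2_congr hU hg2dec hp
    have d21 : DifferentiableOn ℝ (P2 (P1 (P1 (Fu u)))) U :=
      (P2_contDiffOn (m := 1) hU h11 (by norm_num)).differentiableOn (by norm_num)
    rw [show DD2 u p = P2 (gg2 u) p from rfl] at e
    rw [show DD2 u p = P2 (gg2 u) p from rfl, e,
      P2_add (d21.differentiableAt (hU.mem_nhds hp)) (d222.differentiableAt (hU.mem_nhds hp)),
      schwarz4 p hp]
  refine ⟨if1, if2, ?_, ?_, ?_, ?_, ?_⟩
  · intro x y hp
    rw [show pdx (pdx (pdx (pdx u))) x y = pdx (pdx (pdx (pdx u))) (x, y).1 (x, y).2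
        from rfl] at *
    rw [i1111 (x, y) hp, i1112 (x, y) hp, i1122 (x, y) hp, i1222 (x, y) hp, i2222 (x, y) hp]
    rfl
  · intro x y hp
    exact hasDerivAt_slice1 (dg1.differentiableAt (hU.mem_nhds hp))
  · intro x y hp
    exact hasDerivAt_slice2 (dg2.differentiableAt (hU.mem_nhds hp))
  · intro p hp
    rw [hD1dec p hp]
    simp only [H4P]
    nlinarith [sq_nonneg (P1 (P1 (P1 (P1 (Fu u)))) p - P1 (P1 (P2 (P2 (Fu u)))) p),
      sq_nonneg (P1 (P1 (P1 (P2 (Fu u)))) p), sq_nonneg (P1 (P2 (P2 (P2 (Fu u)))) p),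
      sq_nonneg (P2 (P2 (P2 (P2 (Fu u)))) p), sq_nonneg (P1 (P1 (P2 (P2 (Fu u)))) p)]
  · intro p hp
    rw [hD2dec p hp]
    simp only [H4P]
    nlinarith [sq_nonneg (P1 (P1 (P2 (P2 (Fu u)))) p - P2 (P2 (P2 (P2 (Fu u)))) p),
      sq_nonneg (P1 (P1 (P1 (P2 (Fu u)))) p), sq_nonneg (P1 (P2 (P2 (P2 (Fu u)))) p),
      sq_nonneg (P1 (P1 (P1 (P1 (Fu u)))) p), sq_nonneg (P1 (P1 (P2 (P2 (Fu u)))) p)]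

end IdentBlock


/-- `|∫ f| ≤ ∫ g` when `|f| ≤ g` pointwise on `[a,b]` and `g` is integrable. -/
lemma my_abs_integral_le {f g : ℝ → ℝ} {a b : ℝ} (hab : a ≤ b)
    (h : ∀ t ∈ Set.Icc a b, |f t| ≤ g t) (hg : IntervalIntegrable g volume a b) :
    |∫ t in a..b, f t| ≤ ∫ t in a..b, g t := by
  have h' : ∀ᵐ t ∂volume.restrict (Set.uIoc a b), ‖f t‖ ≤ g t := by
    rw [Set.uIoc_of_le hab]
    filter_upwards [ae_restrict_mem measurableSet_Ioc] with t ht using by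
      simpa [Real.norm_eq_abs] using h t (Set.Ioc_subset_Icc_self ht)
  have hb := intervalIntegral.norm_integral_le_abs_of_norm_le h' hg
  rw [Real.norm_eq_abs] at hb
  refine hb.trans ?_
  rw [abs_of_nonneg (intervalIntegral.integral_nonneg hab
    (fun t ht => (abs_nonneg (f t)).trans (h t ht)))]

lemma contOn_param {V : Set (ℝ × ℝ)} (hV : IsOpen V) {g : ℝ × ℝ → ℝ}
    (hg : ContinuousOn g V) {a b c d : ℝ} (hcd : c ≤ d)
    (hK : Set.Icc a b ×ˢ Set.Icc c d ⊆ V) :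
    ContinuousOn (fun x => ∫ y in c..d, g (x, y)) (Set.Icc a b) := by
  have hcomp : IsCompact (Set.Icc a b ×ˢ Set.Icc c d) := isCompact_Icc.prod isCompact_Icc
  obtain ⟨M, hM⟩ := hcomp.exists_bound_of_continuousOn (hg.mono hK)
  intro x₀ hx₀
  apply intervalIntegral.continuousWithinAt_of_dominated_interval (bound := fun _ => M)
  · filter_upwards [self_mem_nhdsWithin] with x hx
    have hcont : ContinuousOn (fun y => g (x, y)) (Set.Ioc c d) := by
      intro y hy
      have hyV : (x, y) ∈ V := hK ⟨hx, Set.Ioc_subset_Icc_self hy⟩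
      exact ((hg.continuousAt (hV.mem_nhds hyV)).comp
        ((Continuous.prodMk continuous_const continuous_id).continuousAt)).continuousWithinAt
    rw [Set.uIoc_of_le hcd]
    exact hcont.aestronglyMeasurable measurableSet_Ioc
  · filter_upwards [self_mem_nhdsWithin] with x hx
    refine Filter.Eventually.of_forall (fun y hy => ?_)
    rw [Set.uIoc_of_le hcd] at hy
    exact hM (x, y) ⟨hx, Set.Ioc_subset_Icc_self hy⟩
  · exact intervalIntegrable_const
  · refine Filter.Eventually.of_forall (fun y hy => ?_)
    rw [Set.uIoc_of_le hcd] at hy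
    have hyV : (x₀, y) ∈ V := hK ⟨hx₀, Set.Ioc_subset_Icc_self hy⟩
    have hc : ContinuousAt (fun x : ℝ => g (x, y)) x₀ :=
      (hg.continuousAt (hV.mem_nhds hyV)).comp (x := x₀)
        ((continuous_id.prodMk continuous_const).continuousAt)
    exact hc.continuousWithinAt

lemma integral_swap_rect {g : ℝ × ℝ → ℝ} {a b c d : ℝ} (hab : a ≤ b) (hcd : c ≤ d)
    (hg : ContinuousOn g (Set.Icc a b ×ˢ Set.Icc c d)) :
    (∫ x in a..b, ∫ y in c..d, g (x, y)) = ∫ y in c..d, ∫ x in a..b, g (x, y) := by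
  have hint : IntegrableOn g (Set.Icc a b ×ˢ Set.Icc c d) volume :=
    hg.integrableOn_compact (isCompact_Icc.prod isCompact_Icc)
  have hint' : Integrable (Function.uncurry fun x y => g (x, y))
      ((volume.restrict (Set.Ioc a b)).prod (volume.restrict (Set.Ioc c d))) := by
    rw [Measure.prod_restrict]
    have : IntegrableOn g (Set.Ioc a b ×ˢ Set.Ioc c d) volume :=
      hint.mono_set (Set.prod_mono Set.Ioc_subset_Icc_self Set.Ioc_subset_Icc_self)
    rw [MeasureTheory.Measure.volume_eq_prod] at this
    exact this
  have := MeasureTheory.integral_integral_swap hint'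
  simp_rw [intervalIntegral.integral_of_le hab, intervalIntegral.integral_of_le hcd]
  exact this

lemma hasDerivAt_poly4 (k0 k1 k2 k3 k4 x : ℝ) :
    HasDerivAt (fun t => k0 + k1 * t + k2 * t ^ 2 + k3 * t ^ 3 + k4 * t ^ 4)
      (k1 + 2 * k2 * x + 3 * k3 * x ^ 2 + 4 * k4 * x ^ 3) x := by
  have H := ((((hasDerivAt_const x k0).add ((hasDerivAt_id x).const_mul k1)).add
    ((hasDerivAt_pow 2 x).const_mul k2)).add ((hasDerivAt_pow 3 x).const_mul k3)).add
    ((hasDerivAt_pow 4 x).const_mul k4)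
  have e : k1 + 2 * k2 * x + 3 * k3 * x ^ 2 + 4 * k4 * x ^ 3
      = 0 + k1 * 1 + k2 * (↑2 * x ^ (2 - 1)) + k3 * (↑3 * x ^ (3 - 1))
        + k4 * (↑4 * x ^ (4 - 1)) := by norm_num; ring
  rw [e]
  exact H

lemma hasDerivAt_poly3' (k0 k1 k2 k3 x : ℝ) :
    HasDerivAt (fun t => k0 + k1 * t + k2 * t ^ 2 + k3 * t ^ 3)
      (k1 + 2 * k2 * x + 3 * k3 * x ^ 2) x := by
  have H := (((hasDerivAt_const x k0).add ((hasDerivAt_id x).const_mul k1)).add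
    ((hasDerivAt_pow 2 x).const_mul k2)).add ((hasDerivAt_pow 3 x).const_mul k3)
  have e : k1 + 2 * k2 * x + 3 * k3 * x ^ 2
      = 0 + k1 * 1 + k2 * (↑2 * x ^ (2 - 1)) + k3 * (↑3 * x ^ (3 - 1)) := by norm_num; ring
  rw [e]
  exact H

lemma integral_poly3 (k0 k1 k2 k3 a b : ℝ) :
    (∫ t in a..b, (k0 + k1 * t + k2 * t ^ 2 + k3 * t ^ 3))
      = (k0 * b + k1 / 2 * b ^ 2 + k2 / 3 * b ^ 3 + k3 / 4 * b ^ 4)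
        - (k0 * a + k1 / 2 * a ^ 2 + k2 / 3 * a ^ 3 + k3 / 4 * a ^ 4) := by
  have hd : ∀ t ∈ Set.uIcc a b, HasDerivAt
      (fun s => 0 + k0 * s + k1 / 2 * s ^ 2 + k2 / 3 * s ^ 3 + k3 / 4 * s ^ 4)
      (k0 + k1 * t + k2 * t ^ 2 + k3 * t ^ 3) t := by
    intro t _
    have e : k0 + k1 * t + k2 * t ^ 2 + k3 * t ^ 3
        = k0 + 2 * (k1 / 2) * t + 3 * (k2 / 3) * t ^ 2 + 4 * (k3 / 4) * t ^ 3 := by ring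
    rw [e]
    exact hasDerivAt_poly4 0 k0 (k1 / 2) (k2 / 3) (k3 / 4) t
  have := intervalIntegral.integral_eq_sub_of_hasDerivAt hd
    (Continuous.intervalIntegrable (by fun_prop) _ _)
  rw [this]
  ring

section Wside
variable {h x1c x2c c0 c1 c2 c3 c4 c5 c6 c7 : ℝ} {w : ℝ → ℝ → ℝ}

lemma w_pdx (hh : h ≠ 0)
    (hw : ∀ x y : ℝ, w x y = c0 + c1 * x + c2 * y + c3 * x ^ 2 + c4 * (x * y) + c5 * y ^ 2
      + c6 * x ^ 3 + c7 * y ^ 3) :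
    ∀ x y : ℝ, pdx (fun a b => w a b - IK w x1c x2c h a b) x y
      = 2 * (c3 + 3 * x1c * c6) * (x - x1c) + c6 * (3 * (x - x1c) ^ 2 - h ^ 2) := by
  intro x y
  set α0 : ℝ := w 0 y - IK w x1c x2c h 0 y with hα0
  set α1 : ℝ := c1 + c4 * y - ((w (x1c + h) (x2c + h) - w (x1c - h) (x2c + h))
      * (1 + (y - x2c) / h) + (w (x1c + h) (x2c - h) - w (x1c - h) (x2c - h))
      * (1 - (y - x2c) / h)) / (4 * h) with hα1
  have hfun : (fun t => w t y - IK w x1c x2c h t y)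
      = fun t => α0 + α1 * t + c3 * t ^ 2 + c6 * t ^ 3 := by
    funext t
    rw [hα0, hα1]
    simp only [IK, hw]
    field_simp
    ring
  show deriv (fun t => w t y - IK w x1c x2c h t y) x = _
  rw [hfun, (hasDerivAt_poly3' α0 α1 c3 c6 x).deriv, hα1]
  simp only [IK, hw]
  field_simp
  ring

lemma w_pdy (hh : h ≠ 0)
    (hw : ∀ x y : ℝ, w x y = c0 + c1 * x + c2 * y + c3 * x ^ 2 + c4 * (x * y) + c5 * y ^ 2
      + c6 * x ^ 3 + c7 * y ^ 3) :
    ∀ x y : ℝ, pdy (fun a b => w a b - IK w x1c x2c h a b) x y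
      = 2 * (c5 + 3 * x2c * c7) * (y - x2c) + c7 * (3 * (y - x2c) ^ 2 - h ^ 2) := by
  intro x y
  set α0 : ℝ := w x 0 - IK w x1c x2c h x 0 with hα0
  set α1 : ℝ := c2 + c4 * x - ((w (x1c + h) (x2c + h) - w (x1c + h) (x2c - h))
      * (1 + (x - x1c) / h) + (w (x1c - h) (x2c + h) - w (x1c - h) (x2c - h))
      * (1 - (x - x1c) / h)) / (4 * h) with hα1
  have hfun : (fun t => w x t - IK w x1c x2c h x t)
      = fun t => α0 + α1 * t + c5 * t ^ 2 + c7 * t ^ 3 := by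
    funext t
    rw [hα0, hα1]
    simp only [IK, hw]
    field_simp
    ring
  show deriv (fun t => w x t - IK w x1c x2c h x t) y = _
  rw [hfun, (hasDerivAt_poly3' α0 α1 c5 c7 y).deriv, hα1]
  simp only [IK, hw]
  field_simp
  ring

lemma w_second (hw : ∀ x y : ℝ, w x y = c0 + c1 * x + c2 * y + c3 * x ^ 2 + c4 * (x * y)
      + c5 * y ^ 2 + c6 * x ^ 3 + c7 * y ^ 3) :
    (∀ x y : ℝ, pdx (pdx w) x y = 2 * c3 + 6 * c6 * x)
    ∧ (∀ x y : ℝ, pdx (pdy w) x y = c4)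
    ∧ (∀ x y : ℝ, pdy (pdx w) x y = c4)
    ∧ (∀ x y : ℝ, pdy (pdy w) x y = 2 * c5 + 6 * c7 * y) := by
  have hx : ∀ x y : ℝ, pdx w x y = (c1 + c4 * y) + 2 * c3 * x + 3 * c6 * x ^ 2 := by
    intro x y
    show deriv (fun t => w t y) x = _
    rw [show (fun t => w t y) = fun t => (c0 + c2 * y + c5 * y ^ 2 + c7 * y ^ 3)
      + (c1 + c4 * y) * t + c3 * t ^ 2 + c6 * t ^ 3 by funext t; rw [hw]; ring]
    rw [(hasDerivAt_poly3' _ _ _ _ x).deriv]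
  have hy : ∀ x y : ℝ, pdy w x y = (c2 + c4 * x) + 2 * c5 * y + 3 * c7 * y ^ 2 := by
    intro x y
    show deriv (fun t => w x t) y = _
    rw [show (fun t => w x t) = fun t => (c0 + c1 * x + c3 * x ^ 2 + c6 * x ^ 3)
      + (c2 + c4 * x) * t + c5 * t ^ 2 + c7 * t ^ 3 by funext t; rw [hw]; ring]
    rw [(hasDerivAt_poly3' _ _ _ _ y).deriv]
  refine ⟨?_, ?_, ?_, ?_⟩
  · intro x y
    show deriv (fun t => pdx w t y) x = _
    rw [show (fun t => pdx w t y) = fun t => (c1 + c4 * y) + (2 * c3) * t + (3 * c6) * t ^ 2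
      + 0 * t ^ 3 by funext t; rw [hx]; ring]
    rw [(hasDerivAt_poly3' _ _ _ _ x).deriv]
    ring
  · intro x y
    show deriv (fun t => pdy w t y) x = _
    rw [show (fun t => pdy w t y) = fun t => (c2 + 2 * c5 * y + 3 * c7 * y ^ 2) + c4 * t
      + 0 * t ^ 2 + 0 * t ^ 3 by funext t; rw [hy]; ring]
    rw [(hasDerivAt_poly3' _ _ _ _ x).deriv]
    ring
  · intro x y
    show deriv (fun t => pdx w x t) y = _
    rw [show (fun t => pdx w x t) = fun t => (c1 + 2 * c3 * x + 3 * c6 * x ^ 2) + c4 * t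
      + 0 * t ^ 2 + 0 * t ^ 3 by funext t; rw [hx]; ring]
    rw [(hasDerivAt_poly3' _ _ _ _ y).deriv]
    ring
  · intro x y
    show deriv (fun t => pdy w x t) y = _
    rw [show (fun t => pdy w x t) = fun t => (c2 + c4 * x) + (2 * c5) * t + (3 * c7) * t ^ 2
      + 0 * t ^ 3 by funext t; rw [hy]; ring]
    rw [(hasDerivAt_poly3' _ _ _ _ y).deriv]
    ring

end Wside

lemma S2_eq (x1c x2c h c3 c4 c5 c6 c7 : ℝ) :
    (∫ x in (x1c - h)..(x1c + h), ∫ y in (x2c - h)..(x2c + h),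
      ((2 * c3 + 6 * c6 * x) ^ 2 + c4 ^ 2 + c4 ^ 2 + (2 * c5 + 6 * c7 * y) ^ 2))
    = 16 * (c3 + 3 * x1c * c6) ^ 2 * h ^ 2 + 48 * c6 ^ 2 * h ^ 4
      + 16 * (c5 + 3 * x2c * c7) ^ 2 * h ^ 2 + 48 * c7 ^ 2 * h ^ 4 + 8 * c4 ^ 2 * h ^ 2 := by
  have hinner : ∀ x : ℝ, (∫ y in (x2c - h)..(x2c + h),
      ((2 * c3 + 6 * c6 * x) ^ 2 + c4 ^ 2 + c4 ^ 2 + (2 * c5 + 6 * c7 * y) ^ 2))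
      = ((4 * c3 ^ 2 + 2 * c4 ^ 2 + 4 * c5 ^ 2) * (2 * h)
          + 12 * c5 * c7 * ((x2c + h) ^ 2 - (x2c - h) ^ 2)
          + 12 * c7 ^ 2 * ((x2c + h) ^ 3 - (x2c - h) ^ 3))
        + (48 * c3 * c6 * h) * x + (72 * c6 ^ 2 * h) * x ^ 2 + 0 * x ^ 3 := by
    intro x
    rw [show (fun y : ℝ => (2 * c3 + 6 * c6 * x) ^ 2 + c4 ^ 2 + c4 ^ 2 + (2 * c5 + 6 * c7 * y) ^ 2)
      = fun y => ((2 * c3 + 6 * c6 * x) ^ 2 + 2 * c4 ^ 2 + 4 * c5 ^ 2) + (24 * c5 * c7) * y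
        + (36 * c7 ^ 2) * y ^ 2 + 0 * y ^ 3 from funext fun y => by ring, integral_poly3]
    ring
  rw [show (fun x : ℝ => ∫ y in (x2c - h)..(x2c + h),
      ((2 * c3 + 6 * c6 * x) ^ 2 + c4 ^ 2 + c4 ^ 2 + (2 * c5 + 6 * c7 * y) ^ 2))
    = fun x => ((4 * c3 ^ 2 + 2 * c4 ^ 2 + 4 * c5 ^ 2) * (2 * h)
          + 12 * c5 * c7 * ((x2c + h) ^ 2 - (x2c - h) ^ 2)
          + 12 * c7 ^ 2 * ((x2c + h) ^ 3 - (x2c - h) ^ 3))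
        + (48 * c3 * c6 * h) * x + (72 * c6 ^ 2 * h) * x ^ 2 + 0 * x ^ 3
    from funext hinner, integral_poly3]
  ring

lemma phi_int_zero (A c6 x1c h : ℝ) :
    (∫ x in (x1c - h)..(x1c + h), (2 * A * (x - x1c) + c6 * (3 * (x - x1c) ^ 2 - h ^ 2))) = 0 := by
  rw [show (fun x : ℝ => 2 * A * (x - x1c) + c6 * (3 * (x - x1c) ^ 2 - h ^ 2))
    = fun x => (-(2 * A * x1c) + 3 * c6 * x1c ^ 2 - c6 * h ^ 2) + (2 * A - 6 * c6 * x1c) * x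
      + (3 * c6) * x ^ 2 + 0 * x ^ 3 from funext fun x => by ring, integral_poly3]
  ring

lemma int_abs_dev (x1c h : ℝ) (hh : 0 ≤ h) :
    (∫ x in (x1c - h)..(x1c + h), |x - x1c|) = h ^ 2 := by
  have hi1 : IntervalIntegrable (fun x : ℝ => |x - x1c|) volume (x1c - h) x1c :=
    Continuous.intervalIntegrable (by fun_prop) _ _
  have hi2 : IntervalIntegrable (fun x : ℝ => |x - x1c|) volume x1c (x1c + h) :=
    Continuous.intervalIntegrable (by fun_prop) _ _
  rw [← intervalIntegral.integral_add_adjacent_intervals hi1 hi2]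
  have e1 : (∫ x in (x1c - h)..x1c, |x - x1c|) = ∫ x in (x1c - h)..x1c,
      (x1c + (-1) * x + 0 * x ^ 2 + 0 * x ^ 3) := by
    apply intervalIntegral.integral_congr
    intro x hx
    rw [Set.uIcc_of_le (by linarith)] at hx
    have hle : x ≤ x1c := hx.2
    show |x - x1c| = _
    rw [abs_of_nonpos (by linarith)]
    ring
  have e2 : (∫ x in x1c..(x1c + h), |x - x1c|) = ∫ x in x1c..(x1c + h),
      (-x1c + 1 * x + 0 * x ^ 2 + 0 * x ^ 3) := by
    apply intervalIntegral.integral_congr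
    intro x hx
    rw [Set.uIcc_of_le (by linarith)] at hx
    have hle : x1c ≤ x := hx.1
    show |x - x1c| = _
    rw [abs_of_nonneg (by linarith)]
    ring
  rw [e1, e2, integral_poly3, integral_poly3]
  ring

lemma phi_abs_bound (A c6 x1c h : ℝ) (hh : 0 < h) :
    (∫ x in (x1c - h)..(x1c + h), |2 * A * (x - x1c) + c6 * (3 * (x - x1c) ^ 2 - h ^ 2)|)
      ≤ 2 * |A| * h ^ 2 + 4 * |c6| * h ^ 3 := by
  have hab : x1c - h ≤ x1c + h := by linarith
  have habs : ∀ x ∈ Set.Icc (x1c - h) (x1c + h),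
      |2 * A * (x - x1c) + c6 * (3 * (x - x1c) ^ 2 - h ^ 2)|
        ≤ 2 * |A| * |x - x1c| + |c6| * (3 * (x - x1c) ^ 2 + h ^ 2) := by
    intro x _
    have t1 : |2 * A * (x - x1c) + c6 * (3 * (x - x1c) ^ 2 - h ^ 2)|
        ≤ |2 * A * (x - x1c)| + |c6 * (3 * (x - x1c) ^ 2 - h ^ 2)| := abs_add_le _ _
    have t2 : |2 * A * (x - x1c)| = 2 * |A| * |x - x1c| := by
      rw [abs_mul, abs_mul]; simp [abs_of_nonneg]
    have t3 : |c6 * (3 * (x - x1c) ^ 2 - h ^ 2)| ≤ |c6| * (3 * (x - x1c) ^ 2 + h ^ 2) := by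
      rw [abs_mul]
      apply mul_le_mul_of_nonneg_left _ (abs_nonneg c6)
      rw [abs_le]
      constructor <;> nlinarith [sq_nonneg (x - x1c), sq_nonneg h]
    linarith
  have hint1 : IntervalIntegrable
      (fun x : ℝ => |2 * A * (x - x1c) + c6 * (3 * (x - x1c) ^ 2 - h ^ 2)|) volume
      (x1c - h) (x1c + h) := Continuous.intervalIntegrable (by fun_prop) _ _
  have hint2 : IntervalIntegrable
      (fun x : ℝ => 2 * |A| * |x - x1c| + |c6| * (3 * (x - x1c) ^ 2 + h ^ 2)) volume
      (x1c - h) (x1c + h) := Continuous.intervalIntegrable (by fun_prop) _ _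
  have hmono := intervalIntegral.integral_mono_on hab hint1 hint2 habs
  refine hmono.trans ?_
  have hsplit : (∫ x in (x1c - h)..(x1c + h),
      (2 * |A| * |x - x1c| + |c6| * (3 * (x - x1c) ^ 2 + h ^ 2)))
      = 2 * |A| * (∫ x in (x1c - h)..(x1c + h), |x - x1c|)
        + |c6| * (∫ x in (x1c - h)..(x1c + h), (3 * (x - x1c) ^ 2 + h ^ 2)) := by
    rw [intervalIntegral.integral_add (Continuous.intervalIntegrable (by fun_prop) _ _)
      (Continuous.intervalIntegrable (by fun_prop) _ _),
      intervalIntegral.integral_const_mul, intervalIntegral.integral_const_mul]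
  rw [hsplit, int_abs_dev x1c h hh.le]
  have : (∫ x in (x1c - h)..(x1c + h), (3 * (x - x1c) ^ 2 + h ^ 2)) = 4 * h ^ 3 := by
    rw [show (fun x : ℝ => 3 * (x - x1c) ^ 2 + h ^ 2)
      = fun x => (3 * x1c ^ 2 + h ^ 2) + (-(6 * x1c)) * x + 3 * x ^ 2 + 0 * x ^ 3
      from funext fun x => by ring, integral_poly3]
    ring
  rw [this]
  nlinarith [abs_nonneg A, abs_nonneg c6, sq_nonneg h, hh]

lemma eps_trick {I N2 area : ℝ} (hN2 : 0 ≤ N2) (harea : 0 ≤ area)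
    (hI : ∀ ε : ℝ, 0 < ε → I ≤ N2 / (2 * ε) + ε / 2 * area) :
    I ≤ Real.sqrt N2 * Real.sqrt area := by
  have hsq : 0 ≤ Real.sqrt N2 * Real.sqrt area :=
    mul_nonneg (Real.sqrt_nonneg _) (Real.sqrt_nonneg _)
  rcases eq_or_lt_of_le hN2 with hN0 | hNpos
  · have hle : I ≤ 0 := by
      apply le_of_forall_pos_le_add
      intro δ hδ
      have := hI (2 * δ / (area + 1)) (by positivity)
      rw [← hN0] at this
      have harea1 : area / (area + 1) ≤ 1 := by
        rw [div_le_one (by positivity)]; linarith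
      calc I ≤ 0 / (2 * (2 * δ / (area + 1))) + (2 * δ / (area + 1)) / 2 * area := this
        _ = δ * (area / (area + 1)) := by field_simp; ring
        _ ≤ δ * 1 := by
            apply mul_le_mul_of_nonneg_left harea1 hδ.le
        _ = 0 + δ := by ring
    linarith
  · rcases eq_or_lt_of_le harea with hA0 | hApos
    · have hle : I ≤ 0 := by
        apply le_of_forall_pos_le_add
        intro δ hδ
        have := hI (N2 / δ) (by positivity)
        rw [← hA0] at this
        calc I ≤ N2 / (2 * (N2 / δ)) + N2 / δ / 2 * 0 := this
          _ = δ / 2 := by field_simp; ring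
          _ ≤ 0 + δ := by linarith
      linarith
    · have hsN : 0 < Real.sqrt N2 := Real.sqrt_pos.mpr hNpos
      have hsA : 0 < Real.sqrt area := Real.sqrt_pos.mpr hApos
      have := hI (Real.sqrt N2 / Real.sqrt area) (by positivity)
      have e : N2 / (2 * (Real.sqrt N2 / Real.sqrt area))
          + (Real.sqrt N2 / Real.sqrt area) / 2 * area
          = Real.sqrt N2 * Real.sqrt area := by
        rw [show N2 = Real.sqrt N2 * Real.sqrt N2 from (Real.mul_self_sqrt hNpos.le).symm,
          show area = Real.sqrt area * Real.sqrt area from (Real.mul_self_sqrt hApos.le).symm]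
        field_simp
        simp only [Real.sqrt_sq hsN.le, Real.sqrt_sq hsA.le]
        nlinarith [Real.mul_self_sqrt hNpos.le, Real.mul_self_sqrt hApos.le, hsN, hsA,
          mul_pos hsN hsA]
      linarith [e ▸ this]

section Doubles
variable {V : Set (ℝ × ℝ)} {a b c d : ℝ}

lemma slice_contOn {f : ℝ × ℝ → ℝ} (hV : IsOpen V) (hf : ContinuousOn f V)
    (hK : Set.Icc a b ×ˢ Set.Icc c d ⊆ V) {x : ℝ} (hx : x ∈ Set.Icc a b) :
    ContinuousOn (fun y => f (x, y)) (Set.Icc c d) := by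
  intro y hy
  exact ((hf.continuousAt (hV.mem_nhds (hK ⟨hx, hy⟩))).comp (x := y)
    ((continuous_const.prodMk continuous_id).continuousAt)).continuousWithinAt

lemma double_mono {f g : ℝ × ℝ → ℝ} (hV : IsOpen V) (hf : ContinuousOn f V)
    (hg : ContinuousOn g V) (hab : a ≤ b) (hcd : c ≤ d)
    (hK : Set.Icc a b ×ˢ Set.Icc c d ⊆ V)
    (hle : ∀ p ∈ Set.Icc a b ×ˢ Set.Icc c d, f p ≤ g p) :
    (∫ x in a..b, ∫ y in c..d, f (x, y)) ≤ ∫ x in a..b, ∫ y in c..d, g (x, y) := by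
  apply intervalIntegral.integral_mono_on hab
  · exact ((contOn_param hV hf hcd hK).mono (by rw [Set.uIcc_of_le hab])).intervalIntegrable
  · exact ((contOn_param hV hg hcd hK).mono (by rw [Set.uIcc_of_le hab])).intervalIntegrable
  · intro x hx
    apply intervalIntegral.integral_mono_on hcd
    · exact ((slice_contOn hV hf hK hx).mono (by rw [Set.uIcc_of_le hcd])).intervalIntegrable
    · exact ((slice_contOn hV hg hK hx).mono (by rw [Set.uIcc_of_le hcd])).intervalIntegrable
    · intro y hy
      exact hle (x, y) ⟨hx, hy⟩

lemma double_nonneg {f : ℝ × ℝ → ℝ} (hab : a ≤ b) (hcd : c ≤ d)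
    (hf : ∀ p, 0 ≤ f p) :
    0 ≤ ∫ x in a..b, ∫ y in c..d, f (x, y) := by
  apply intervalIntegral.integral_nonneg hab
  intro x _
  exact intervalIntegral.integral_nonneg hcd (fun y _ => hf (x, y))

lemma double_affine {f : ℝ × ℝ → ℝ} (hV : IsOpen V) (hf : ContinuousOn f V)
    (hab : a ≤ b) (hcd : c ≤ d) (hK : Set.Icc a b ×ˢ Set.Icc c d ⊆ V) (k e : ℝ) :
    (∫ x in a..b, ∫ y in c..d, (f (x, y) / k + e))
      = (∫ x in a..b, ∫ y in c..d, f (x, y)) / k + (b - a) * ((d - c) * e) := by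
  have hinner : ∀ x ∈ Set.Icc a b, (∫ y in c..d, (f (x, y) / k + e))
      = (∫ y in c..d, f (x, y)) / k + (d - c) * e := by
    intro x hx
    rw [intervalIntegral.integral_add
      (((slice_contOn hV hf hK hx).mono (by rw [Set.uIcc_of_le hcd])).intervalIntegrable.div_const k)
      intervalIntegrable_const, intervalIntegral.integral_div, intervalIntegral.integral_const]
    simp [smul_eq_mul]
  rw [intervalIntegral.integral_congr (g := fun x => (∫ y in c..d, f (x, y)) / k + (d - c) * e)
    (fun x hx => hinner x (by rwa [Set.uIcc_of_le hab] at hx))]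
  rw [intervalIntegral.integral_add
    (((contOn_param hV hf hcd hK).mono (by rw [Set.uIcc_of_le hab])).intervalIntegrable.div_const k)
    intervalIntegrable_const, intervalIntegral.integral_div, intervalIntegral.integral_const]
  simp [smul_eq_mul]

end Doubles

/-- The core one-dimensional estimate. -/
lemma slice_bound {G D : ℝ → ℝ} {x1c h A c6 : ℝ} (hh : 0 < h)
    (hder : ∀ t ∈ Set.Icc (x1c - h) (x1c + h), HasDerivAt G (D t) t)
    (hDcont : ContinuousOn D (Set.Icc (x1c - h) (x1c + h)))
    (hGcont : ContinuousOn G (Set.Icc (x1c - h) (x1c + h))) :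
    |∫ x in (x1c - h)..(x1c + h), G x * (2 * A * (x - x1c) + c6 * (3 * (x - x1c) ^ 2 - h ^ 2))|
      ≤ (2 * |A| * h ^ 2 + 4 * |c6| * h ^ 3)
        * ∫ x in (x1c - h)..(x1c + h), |D x| := by
  have hab : x1c - h ≤ x1c + h := by linarith
  have hmem : x1c ∈ Set.Icc (x1c - h) (x1c + h) := by constructor <;> linarith
  set φ : ℝ → ℝ := fun x => 2 * A * (x - x1c) + c6 * (3 * (x - x1c) ^ 2 - h ^ 2) with hφ
  have hφc : Continuous φ := by fun_prop
  have hDI : IntervalIntegrable D volume (x1c - h) (x1c + h) :=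
    (hDcont.mono (by rw [Set.uIcc_of_le hab])).intervalIntegrable
  have habsDI : IntervalIntegrable (fun x => |D x|) volume (x1c - h) (x1c + h) :=
    ((hDcont.abs).mono (by rw [Set.uIcc_of_le hab])).intervalIntegrable
  have hMnonneg : 0 ≤ ∫ x in (x1c - h)..(x1c + h), |D x| :=
    intervalIntegral.integral_nonneg hab (fun t _ => abs_nonneg _)
  -- difference bound
  have hdiff : ∀ x ∈ Set.Icc (x1c - h) (x1c + h),
      |G x - G x1c| ≤ ∫ t in (x1c - h)..(x1c + h), |D t| := by
    intro x hx
    have hsub : Set.uIcc x1c x ⊆ Set.Icc (x1c - h) (x1c + h) := Set.uIcc_subset_Icc hmem hx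
    have hftc : (∫ t in x1c..x, D t) = G x - G x1c := by
      apply intervalIntegral.integral_eq_sub_of_hasDerivAt
      · exact fun t ht => hder t (hsub ht)
      · exact ((hDcont.mono hsub).intervalIntegrable)
    rw [← hftc]
    rcases le_or_gt x1c x with hcase | hcase
    · calc |∫ t in x1c..x, D t| ≤ ∫ t in x1c..x, |D t| :=
            intervalIntegral.abs_integral_le_integral_abs hcase
        _ ≤ ∫ t in (x1c - h)..(x1c + h), |D t| := by
            apply intervalIntegral.integral_mono_interval (by linarith [hmem.1]) hcase hx.2
            · filter_upwards with t using abs_nonneg _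
            · exact habsDI
    · rw [intervalIntegral.integral_symm, abs_neg]
      calc |∫ t in x..x1c, D t| ≤ ∫ t in x..x1c, |D t| :=
            intervalIntegral.abs_integral_le_integral_abs hcase.le
        _ ≤ ∫ t in (x1c - h)..(x1c + h), |D t| := by
            apply intervalIntegral.integral_mono_interval hx.1 hcase.le (by linarith [hmem.2])
            · filter_upwards with t using abs_nonneg _
            · exact habsDI
  -- remove the constant part
  have hsplit : (∫ x in (x1c - h)..(x1c + h), G x * φ x)
      = ∫ x in (x1c - h)..(x1c + h), (G x - G x1c) * φ x := by
    have e : (fun x => G x * φ x)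
        = fun x => (G x - G x1c) * φ x + G x1c * φ x := funext fun x => by ring
    rw [e, intervalIntegral.integral_add (f := fun x => (G x - G x1c) * φ x) (g := fun x => G x1c * φ x)
      ((((hGcont.sub continuousOn_const).mul (hφc.continuousOn)).mono
        (by rw [Set.uIcc_of_le hab])).intervalIntegrable)
      ((continuousOn_const.mul hφc.continuousOn).mono
        (by rw [Set.uIcc_of_le hab])).intervalIntegrable,
      intervalIntegral.integral_const_mul, hφ, phi_int_zero]
    ring
  rw [show (∫ x in (x1c - h)..(x1c + h),
      G x * (2 * A * (x - x1c) + c6 * (3 * (x - x1c) ^ 2 - h ^ 2)))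
      = ∫ x in (x1c - h)..(x1c + h), G x * φ x from rfl, hsplit]
  have hb := my_abs_integral_le hab (f := fun x => (G x - G x1c) * φ x)
    (g := fun x => (∫ t in (x1c - h)..(x1c + h), |D t|) * |φ x|) ?_ ?_
  · refine hb.trans ?_
    rw [intervalIntegral.integral_const_mul]
    rw [mul_comm (2 * |A| * h ^ 2 + 4 * |c6| * h ^ 3) _]
    apply mul_le_mul_of_nonneg_left _ hMnonneg
    exact phi_abs_bound A c6 x1c h hh
  · intro x hx
    rw [abs_mul]
    exact mul_le_mul_of_nonneg_right (hdiff x hx) (abs_nonneg _)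
  · exact (Continuous.intervalIntegrable (by fun_prop) _ _)


lemma slice_contOn' {V : Set (ℝ × ℝ)} {a b c d : ℝ} {f : ℝ × ℝ → ℝ} (hV : IsOpen V)
    (hf : ContinuousOn f V) (hK : Set.Icc a b ×ˢ Set.Icc c d ⊆ V) {y : ℝ}
    (hy : y ∈ Set.Icc c d) : ContinuousOn (fun x => f (x, y)) (Set.Icc a b) := by
  intro x hx
  exact ((hf.continuousAt (hV.mem_nhds (hK ⟨hx, hy⟩))).comp (x := x)
    ((continuous_id.prodMk continuous_const).continuousAt)).continuousWithinAt

lemma contOn_param' {V : Set (ℝ × ℝ)} (hV : IsOpen V) {g : ℝ × ℝ → ℝ}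
    (hg : ContinuousOn g V) {a b c d : ℝ} (hab : a ≤ b)
    (hK : Set.Icc a b ×ˢ Set.Icc c d ⊆ V) :
    ContinuousOn (fun y => ∫ x in a..b, g (x, y)) (Set.Icc c d) := by
  have hV' : IsOpen (Prod.swap ⁻¹' V : Set (ℝ × ℝ)) := hV.preimage continuous_swap
  have hg' : ContinuousOn (fun p : ℝ × ℝ => g (p.2, p.1)) (Prod.swap ⁻¹' V) :=
    hg.comp continuous_swap.continuousOn (fun p hp => hp)
  have hK' : Set.Icc c d ×ˢ Set.Icc a b ⊆ (Prod.swap ⁻¹' V : Set (ℝ × ℝ)) := by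
    rintro ⟨y, x⟩ ⟨hy, hx⟩
    exact hK ⟨hx, hy⟩
  exact contOn_param hV' hg' hab hK'


lemma abs_le_sq_div (x ε : ℝ) (hε : 0 < ε) : |x| ≤ x ^ 2 / (2 * ε) + ε / 2 := by
  have e : x ^ 2 / (2 * ε) + ε / 2 - |x| = (|x| - ε) ^ 2 / (2 * ε) := by
    rw [div_add' _ _ _ (by positivity), div_sub' (by positivity)]
    rw [div_eq_div_iff (by positivity) (by positivity)]
    nlinarith [sq_abs x]
  nlinarith [div_nonneg (sq_nonneg (|x| - ε)) (by positivity : (0:ℝ) ≤ 2 * ε)]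

set_option maxHeartbeats 1000000 in
/-- Superconvergence of the volume term of the consistency error on one element. -/
theorem stmt_4 :
    ∃ C > (0:ℝ), ∀ h : ℝ, 0 < h → ∀ x1c x2c : ℝ, ∀ u w : ℝ → ℝ → ℝ,
      C4Near u (x1c - h) (x1c + h) (x2c - h) (x2c + h) → MorleyShape2 w →
      |∫ x in (x1c - h)..(x1c + h), ∫ y in (x2c - h)..(x2c + h),
          pdx (fun a b => pdx (pdx u) a b + pdy (pdy u) a b) x y
              * pdx (fun a b => w a b - IK w x1c x2c h a b) x y
            + pdy (fun a b => pdx (pdx u) a b + pdy (pdy u) a b) x y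
              * pdy (fun a b => w a b - IK w x1c x2c h a b) x y|
        ≤ C * h ^ 2 * semiH4R u (x1c - h) (x1c + h) (x2c - h) (x2c + h) * semiH2R w (x1c - h) (x1c + h) (x2c - h) (x2c + h) := by
  refine ⟨100, by norm_num, ?_⟩
  intro h hh x1c x2c u w hC4 hMS
  obtain ⟨U, hU, hKU, hFpre⟩ := hC4
  obtain ⟨c0, c1, c2, c3, c4, c5, c6, c7, hw⟩ := hMS
  have hF : ContDiffOn ℝ 4 (Fu u) U := hFpre
  have hab : x1c - h ≤ x1c + h := by linarith
  have hcd : x2c - h ≤ x2c + h := by linarith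
  obtain ⟨hSL2, hg1s, hg2s, hD1c, hD2c, hH4c⟩ := smooth_block hU hF
  obtain ⟨if1, if2, iH4, hDg1, hDg2, hD1le, hD2le⟩ := ident_all hU hF
  have hg1c : ContinuousOn (gg1 u) U := hg1s.continuousOn
  have hg2c : ContinuousOn (gg2 u) U := hg2s.continuousOn
  have hvx := w_pdx (x1c := x1c) (x2c := x2c) (ne_of_gt hh) hw
  have hvy := w_pdy (x1c := x1c) (x2c := x2c) (ne_of_gt hh) hw
  obtain ⟨hxx, hxy, hyx, hyy⟩ := w_second hw
  have hmemU : ∀ {x y : ℝ}, x ∈ Set.Icc (x1c - h) (x1c + h) →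
      y ∈ Set.Icc (x2c - h) (x2c + h) → (x, y) ∈ U := fun hx hy => hKU ⟨hx, hy⟩
  -- continuity of products
  have hcontg1p : ContinuousOn (fun p : ℝ × ℝ => gg1 u p
      * (2 * (c3 + 3 * x1c * c6) * (p.1 - x1c) + c6 * (3 * (p.1 - x1c) ^ 2 - h ^ 2))) U :=
    hg1c.mul (Continuous.continuousOn (by fun_prop))
  have hcontg2p : ContinuousOn (fun p : ℝ × ℝ => gg2 u p
      * (2 * (c5 + 3 * x2c * c7) * (p.2 - x2c) + c7 * (3 * (p.2 - x2c) ^ 2 - h ^ 2))) U :=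
    hg2c.mul (Continuous.continuousOn (by fun_prop))
  -- Step A : rewrite the integrand
  have hLHS : (∫ x in (x1c - h)..(x1c + h), ∫ y in (x2c - h)..(x2c + h),
        pdx (fun a b => pdx (pdx u) a b + pdy (pdy u) a b) x y
            * pdx (fun a b => w a b - IK w x1c x2c h a b) x y
          + pdy (fun a b => pdx (pdx u) a b + pdy (pdy u) a b) x y
            * pdy (fun a b => w a b - IK w x1c x2c h a b) x y)
      = ∫ x in (x1c - h)..(x1c + h), ∫ y in (x2c - h)..(x2c + h),
        (gg1 u (x, y) * (2 * (c3 + 3 * x1c * c6) * (x - x1c)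
            + c6 * (3 * (x - x1c) ^ 2 - h ^ 2))
          + gg2 u (x, y) * (2 * (c5 + 3 * x2c * c7) * (y - x2c)
            + c7 * (3 * (y - x2c) ^ 2 - h ^ 2))) := by
    apply intervalIntegral.integral_congr
    intro x hx
    rw [Set.uIcc_of_le hab] at hx
    apply intervalIntegral.integral_congr
    intro y hy
    rw [Set.uIcc_of_le hcd] at hy
    have hp := hmemU hx hy
    beta_reduce
    rw [if1 x y hp, if2 x y hp, hvx x y, hvy x y]
  -- Step B : split
  have hsplitIn : ∀ x ∈ Set.Icc (x1c - h) (x1c + h),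
      (∫ y in (x2c - h)..(x2c + h),
        (gg1 u (x, y) * (2 * (c3 + 3 * x1c * c6) * (x - x1c)
            + c6 * (3 * (x - x1c) ^ 2 - h ^ 2))
          + gg2 u (x, y) * (2 * (c5 + 3 * x2c * c7) * (y - x2c)
            + c7 * (3 * (y - x2c) ^ 2 - h ^ 2))))
      = (∫ y in (x2c - h)..(x2c + h), gg1 u (x, y) * (2 * (c3 + 3 * x1c * c6) * (x - x1c)
            + c6 * (3 * (x - x1c) ^ 2 - h ^ 2)))
        + ∫ y in (x2c - h)..(x2c + h), gg2 u (x, y) * (2 * (c5 + 3 * x2c * c7) * (y - x2c)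
            + c7 * (3 * (y - x2c) ^ 2 - h ^ 2)) := by
    intro x hx
    exact intervalIntegral.integral_add
      (((slice_contOn hU hcontg1p hKU hx).mono
        (by rw [Set.uIcc_of_le hcd])).intervalIntegrable)
      (((slice_contOn hU hcontg2p hKU hx).mono
        (by rw [Set.uIcc_of_le hcd])).intervalIntegrable)
  have hsplit : (∫ x in (x1c - h)..(x1c + h), ∫ y in (x2c - h)..(x2c + h),
        (gg1 u (x, y) * (2 * (c3 + 3 * x1c * c6) * (x - x1c)
            + c6 * (3 * (x - x1c) ^ 2 - h ^ 2))
          + gg2 u (x, y) * (2 * (c5 + 3 * x2c * c7) * (y - x2c)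
            + c7 * (3 * (y - x2c) ^ 2 - h ^ 2))))
      = (∫ x in (x1c - h)..(x1c + h), ∫ y in (x2c - h)..(x2c + h),
          gg1 u (x, y) * (2 * (c3 + 3 * x1c * c6) * (x - x1c)
            + c6 * (3 * (x - x1c) ^ 2 - h ^ 2)))
        + ∫ x in (x1c - h)..(x1c + h), ∫ y in (x2c - h)..(x2c + h),
          gg2 u (x, y) * (2 * (c5 + 3 * x2c * c7) * (y - x2c)
            + c7 * (3 * (y - x2c) ^ 2 - h ^ 2)) := by
    rw [intervalIntegral.integral_congr
      (fun x hx => hsplitIn x (by rwa [Set.uIcc_of_le hab] at hx))]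
    exact intervalIntegral.integral_add
      (((contOn_param hU hcontg1p hcd hKU).mono
        (by rw [Set.uIcc_of_le hab])).intervalIntegrable)
      (((contOn_param hU hcontg2p hcd hKU).mono
        (by rw [Set.uIcc_of_le hab])).intervalIntegrable)
  -- quantities
  have hsqrt2 : Real.sqrt 2 ≤ 2 := by
    nlinarith [Real.sq_sqrt (by norm_num : (0:ℝ) ≤ 2), Real.sqrt_nonneg 2]
  have hsqrtarea : Real.sqrt (2 * h * (2 * h)) = 2 * h := by
    rw [show 2 * h * (2 * h) = (2 * h) ^ 2 by ring, Real.sqrt_sq (by positivity)]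
  have hS4nn : 0 ≤ ∫ x in (x1c - h)..(x1c + h), ∫ y in (x2c - h)..(x2c + h), H4P u (x, y) :=
    double_nonneg (f := H4P u) hab hcd (fun p => by simp only [H4P]; positivity)
  have hH4c2 : ContinuousOn (fun p : ℝ × ℝ => 2 * H4P u p) U := continuousOn_const.mul hH4c
  -- T2 estimate
  have hT2point : ∀ x ∈ Set.Icc (x1c - h) (x1c + h),
      |∫ y in (x2c - h)..(x2c + h), gg2 u (x, y) * (2 * (c5 + 3 * x2c * c7) * (y - x2c)
          + c7 * (3 * (y - x2c) ^ 2 - h ^ 2))|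
        ≤ (2 * |c5 + 3 * x2c * c7| * h ^ 2 + 4 * |c7| * h ^ 3)
          * ∫ y in (x2c - h)..(x2c + h), |DD2 u (x, y)| := by
    intro x hx
    exact slice_bound hh (fun t ht => hDg2 x t (hmemU hx ht))
      (slice_contOn hU hD2c hKU hx) (slice_contOn hU hg2c hKU hx)
  have hT2 : |∫ x in (x1c - h)..(x1c + h), ∫ y in (x2c - h)..(x2c + h),
        gg2 u (x, y) * (2 * (c5 + 3 * x2c * c7) * (y - x2c)
          + c7 * (3 * (y - x2c) ^ 2 - h ^ 2))|
      ≤ (2 * |c5 + 3 * x2c * c7| * h ^ 2 + 4 * |c7| * h ^ 3)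
        * ∫ x in (x1c - h)..(x1c + h), ∫ y in (x2c - h)..(x2c + h), |DD2 u (x, y)| := by
    have hb := my_abs_integral_le hab hT2point
      (((continuousOn_const.mul (contOn_param hU hD2c.abs hcd hKU)).mono
        (by rw [Set.uIcc_of_le hab])).intervalIntegrable)
    exact hb.trans (le_of_eq (intervalIntegral.integral_const_mul _ _))
  have hN22nn : 0 ≤ ∫ x in (x1c - h)..(x1c + h), ∫ y in (x2c - h)..(x2c + h),
      (DD2 u (x, y)) ^ 2 :=
    double_nonneg (f := fun p => (DD2 u p) ^ 2) hab hcd (fun p => sq_nonneg _)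
  have hM2 : (∫ x in (x1c - h)..(x1c + h), ∫ y in (x2c - h)..(x2c + h), |DD2 u (x, y)|)
      ≤ Real.sqrt (∫ x in (x1c - h)..(x1c + h), ∫ y in (x2c - h)..(x2c + h),
          (DD2 u (x, y)) ^ 2) * Real.sqrt (2 * h * (2 * h)) := by
    apply eps_trick hN22nn (by nlinarith [sq_nonneg h] : (0:ℝ) ≤ 2 * h * (2 * h))
    intro ε hε
    have hmono := double_mono (f := fun p => |DD2 u p|)
      (g := fun p => (DD2 u p) ^ 2 / (2 * ε) + ε / 2) hU hD2c.abs
      (((hD2c.pow 2).div_const (2 * ε)).add continuousOn_const) hab hcd hKU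
      (fun p _ => abs_le_sq_div (DD2 u p) ε hε)
    have haff := double_affine (f := fun p => (DD2 u p) ^ 2) hU (hD2c.pow 2) hab hcd hKU
      (2 * ε) (ε / 2)
    exact le_trans hmono (haff.le.trans (le_of_eq (by ring)))
  have hN22le : (∫ x in (x1c - h)..(x1c + h), ∫ y in (x2c - h)..(x2c + h), (DD2 u (x, y)) ^ 2)
      ≤ 2 * ∫ x in (x1c - h)..(x1c + h), ∫ y in (x2c - h)..(x2c + h), H4P u (x, y) := by
    have hmono := double_mono (f := fun p => (DD2 u p) ^ 2) (g := fun p => 2 * H4P u p) hU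
      (hD2c.pow 2) hH4c2 hab hcd hKU (fun p hp => hD2le p (hKU hp))
    refine hmono.trans (le_of_eq ?_)
    rw [intervalIntegral.integral_congr (g := fun x => 2 * ∫ y in (x2c - h)..(x2c + h),
      H4P u (x, y)) (fun x _ => intervalIntegral.integral_const_mul _ _),
      intervalIntegral.integral_const_mul]
  have hsN22 : Real.sqrt (∫ x in (x1c - h)..(x1c + h), ∫ y in (x2c - h)..(x2c + h),
      (DD2 u (x, y)) ^ 2) ≤ 2 * Real.sqrt (∫ x in (x1c - h)..(x1c + h),
        ∫ y in (x2c - h)..(x2c + h), H4P u (x, y)) := by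
    refine (Real.sqrt_le_sqrt hN22le).trans ?_
    rw [Real.sqrt_mul (by norm_num : (0:ℝ) ≤ 2)]
    exact mul_le_mul_of_nonneg_right hsqrt2 (Real.sqrt_nonneg _)
  -- T1 estimate (swapped orientation)
  have hU' : IsOpen (Prod.swap ⁻¹' U : Set (ℝ × ℝ)) := hU.preimage continuous_swap
  have hKU' : Set.Icc (x2c - h) (x2c + h) ×ˢ Set.Icc (x1c - h) (x1c + h)
      ⊆ (Prod.swap ⁻¹' U : Set (ℝ × ℝ)) := by
    rintro ⟨y, x⟩ ⟨hy, hx⟩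
    exact hKU ⟨hx, hy⟩
  have hD1c' : ContinuousOn (fun p : ℝ × ℝ => DD1 u (p.2, p.1)) (Prod.swap ⁻¹' U) :=
    hD1c.comp continuous_swap.continuousOn (fun p hp => hp)
  have hH4c' : ContinuousOn (fun p : ℝ × ℝ => H4P u (p.2, p.1)) (Prod.swap ⁻¹' U) :=
    hH4c.comp continuous_swap.continuousOn (fun p hp => hp)
  have hswapT1 : (∫ x in (x1c - h)..(x1c + h), ∫ y in (x2c - h)..(x2c + h),
        gg1 u (x, y) * (2 * (c3 + 3 * x1c * c6) * (x - x1c)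
          + c6 * (3 * (x - x1c) ^ 2 - h ^ 2)))
      = ∫ y in (x2c - h)..(x2c + h), ∫ x in (x1c - h)..(x1c + h),
        gg1 u (x, y) * (2 * (c3 + 3 * x1c * c6) * (x - x1c)
          + c6 * (3 * (x - x1c) ^ 2 - h ^ 2)) :=
    integral_swap_rect hab hcd (hcontg1p.mono hKU)
  have hT1point : ∀ y ∈ Set.Icc (x2c - h) (x2c + h),
      |∫ x in (x1c - h)..(x1c + h), gg1 u (x, y) * (2 * (c3 + 3 * x1c * c6) * (x - x1c)
          + c6 * (3 * (x - x1c) ^ 2 - h ^ 2))|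
        ≤ (2 * |c3 + 3 * x1c * c6| * h ^ 2 + 4 * |c6| * h ^ 3)
          * ∫ x in (x1c - h)..(x1c + h), |DD1 u (x, y)| := by
    intro y hy
    exact slice_bound hh (fun t ht => hDg1 t y (hmemU ht hy))
      (slice_contOn' hU hD1c hKU hy) (slice_contOn' hU hg1c hKU hy)
  have hT1 : |∫ y in (x2c - h)..(x2c + h), ∫ x in (x1c - h)..(x1c + h),
        gg1 u (x, y) * (2 * (c3 + 3 * x1c * c6) * (x - x1c)
          + c6 * (3 * (x - x1c) ^ 2 - h ^ 2))|
      ≤ (2 * |c3 + 3 * x1c * c6| * h ^ 2 + 4 * |c6| * h ^ 3)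
        * ∫ y in (x2c - h)..(x2c + h), ∫ x in (x1c - h)..(x1c + h), |DD1 u (x, y)| := by
    have hb := my_abs_integral_le hcd hT1point
      (((continuousOn_const.mul (contOn_param' hU hD1c.abs hab hKU)).mono
        (by rw [Set.uIcc_of_le hcd])).intervalIntegrable)
    exact hb.trans (le_of_eq (intervalIntegral.integral_const_mul _ _))
  have hN21nn : 0 ≤ ∫ y in (x2c - h)..(x2c + h), ∫ x in (x1c - h)..(x1c + h),
      (DD1 u (x, y)) ^ 2 :=
    double_nonneg (f := fun p : ℝ × ℝ => (DD1 u (p.2, p.1)) ^ 2) hcd hab (fun p => sq_nonneg _)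
  have hM1 : (∫ y in (x2c - h)..(x2c + h), ∫ x in (x1c - h)..(x1c + h), |DD1 u (x, y)|)
      ≤ Real.sqrt (∫ y in (x2c - h)..(x2c + h), ∫ x in (x1c - h)..(x1c + h),
          (DD1 u (x, y)) ^ 2) * Real.sqrt (2 * h * (2 * h)) := by
    apply eps_trick hN21nn (by nlinarith [sq_nonneg h] : (0:ℝ) ≤ 2 * h * (2 * h))
    intro ε hε
    have hmono := double_mono (f := fun p : ℝ × ℝ => |DD1 u (p.2, p.1)|)
      (g := fun p : ℝ × ℝ => (DD1 u (p.2, p.1)) ^ 2 / (2 * ε) + ε / 2) hU' hD1c'.abs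
      (((hD1c'.pow 2).div_const (2 * ε)).add continuousOn_const) hcd hab hKU'
      (fun p _ => abs_le_sq_div (DD1 u (p.2, p.1)) ε hε)
    have haff := double_affine (f := fun p : ℝ × ℝ => (DD1 u (p.2, p.1)) ^ 2) hU'
      (hD1c'.pow 2) hcd hab hKU' (2 * ε) (ε / 2)
    exact le_trans hmono (haff.le.trans (le_of_eq (by ring)))
  have hswapH4 : (∫ y in (x2c - h)..(x2c + h), ∫ x in (x1c - h)..(x1c + h), H4P u (x, y))
      = ∫ x in (x1c - h)..(x1c + h), ∫ y in (x2c - h)..(x2c + h), H4P u (x, y) :=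
    (integral_swap_rect hab hcd (hH4c.mono hKU)).symm
  have hN21le : (∫ y in (x2c - h)..(x2c + h), ∫ x in (x1c - h)..(x1c + h), (DD1 u (x, y)) ^ 2)
      ≤ 2 * ∫ x in (x1c - h)..(x1c + h), ∫ y in (x2c - h)..(x2c + h), H4P u (x, y) := by
    have hmono := double_mono (f := fun p : ℝ × ℝ => (DD1 u (p.2, p.1)) ^ 2)
      (g := fun p : ℝ × ℝ => 2 * H4P u (p.2, p.1)) hU' (hD1c'.pow 2)
      (continuousOn_const.mul hH4c') hcd hab hKU'
      (fun p hp => hD1le (p.2, p.1) (hKU' hp))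
    refine hmono.trans (le_of_eq ?_)
    rw [intervalIntegral.integral_congr (g := fun y => 2 * ∫ x in (x1c - h)..(x1c + h),
      H4P u (x, y)) (fun y _ => intervalIntegral.integral_const_mul _ _),
      intervalIntegral.integral_const_mul, hswapH4]
  have hsN21 : Real.sqrt (∫ y in (x2c - h)..(x2c + h), ∫ x in (x1c - h)..(x1c + h),
      (DD1 u (x, y)) ^ 2) ≤ 2 * Real.sqrt (∫ x in (x1c - h)..(x1c + h),
        ∫ y in (x2c - h)..(x2c + h), H4P u (x, y)) := by
    refine (Real.sqrt_le_sqrt hN21le).trans ?_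
    rw [Real.sqrt_mul (by norm_num : (0:ℝ) ≤ 2)]
    exact mul_le_mul_of_nonneg_right hsqrt2 (Real.sqrt_nonneg _)
  -- seminorm identifications
  have hsemi4 : semiH4R u (x1c - h) (x1c + h) (x2c - h) (x2c + h)
      = Real.sqrt (∫ x in (x1c - h)..(x1c + h), ∫ y in (x2c - h)..(x2c + h), H4P u (x, y)) := by
    unfold semiH4R
    congr 1
    apply intervalIntegral.integral_congr
    intro x hx
    rw [Set.uIcc_of_le hab] at hx
    apply intervalIntegral.integral_congr
    intro y hy
    rw [Set.uIcc_of_le hcd] at hy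
    beta_reduce
    exact iH4 x y (hmemU hx hy)
  have hsemi2 : semiH2R w (x1c - h) (x1c + h) (x2c - h) (x2c + h)
      = Real.sqrt (16 * (c3 + 3 * x1c * c6) ^ 2 * h ^ 2 + 48 * c6 ^ 2 * h ^ 4
        + 16 * (c5 + 3 * x2c * c7) ^ 2 * h ^ 2 + 48 * c7 ^ 2 * h ^ 4 + 8 * c4 ^ 2 * h ^ 2) := by
    unfold semiH2R
    congr 1
    rw [← S2_eq x1c x2c h c3 c4 c5 c6 c7]
    apply intervalIntegral.integral_congr
    intro x hx
    apply intervalIntegral.integral_congr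
    intro y hy
    beta_reduce
    rw [hxx x y, hxy x y, hyx x y, hyy x y]
  -- coefficient bounds
  set s2 : ℝ := Real.sqrt (16 * (c3 + 3 * x1c * c6) ^ 2 * h ^ 2 + 48 * c6 ^ 2 * h ^ 4
    + 16 * (c5 + 3 * x2c * c7) ^ 2 * h ^ 2 + 48 * c7 ^ 2 * h ^ 4 + 8 * c4 ^ 2 * h ^ 2) with hs2def
  set s4 : ℝ := Real.sqrt (∫ x in (x1c - h)..(x1c + h), ∫ y in (x2c - h)..(x2c + h),
    H4P u (x, y)) with hs4def
  have hs2nn : 0 ≤ s2 := Real.sqrt_nonneg _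
  have hs4nn : 0 ≤ s4 := Real.sqrt_nonneg _
  have hA2 : 4 * h * |c3 + 3 * x1c * c6| ≤ s2 := by
    rw [show 4 * h * |c3 + 3 * x1c * c6|
      = Real.sqrt ((4 * h * |c3 + 3 * x1c * c6|) ^ 2) from (Real.sqrt_sq (by positivity)).symm,
      hs2def]
    apply Real.sqrt_le_sqrt
    rw [mul_pow, mul_pow, sq_abs]
    have hrest : (0:ℝ) ≤ 48 * c6 ^ 2 * h ^ 4 + 16 * (c5 + 3 * x2c * c7) ^ 2 * h ^ 2
        + 48 * c7 ^ 2 * h ^ 4 + 8 * c4 ^ 2 * h ^ 2 := by positivity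
    linarith
  have hc6b : 4 * h ^ 2 * |c6| ≤ s2 := by
    rw [show 4 * h ^ 2 * |c6| = Real.sqrt ((4 * h ^ 2 * |c6|) ^ 2)
      from (Real.sqrt_sq (by positivity)).symm, hs2def]
    apply Real.sqrt_le_sqrt
    rw [mul_pow, mul_pow, sq_abs]
    have hrest : (0:ℝ) ≤ 16 * (c3 + 3 * x1c * c6) ^ 2 * h ^ 2 + 32 * c6 ^ 2 * h ^ 4
        + 16 * (c5 + 3 * x2c * c7) ^ 2 * h ^ 2 + 48 * c7 ^ 2 * h ^ 4 + 8 * c4 ^ 2 * h ^ 2 := by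
      positivity
    linarith
  have hB2 : 4 * h * |c5 + 3 * x2c * c7| ≤ s2 := by
    rw [show 4 * h * |c5 + 3 * x2c * c7|
      = Real.sqrt ((4 * h * |c5 + 3 * x2c * c7|) ^ 2) from (Real.sqrt_sq (by positivity)).symm,
      hs2def]
    apply Real.sqrt_le_sqrt
    rw [mul_pow, mul_pow, sq_abs]
    have hrest : (0:ℝ) ≤ 16 * (c3 + 3 * x1c * c6) ^ 2 * h ^ 2 + 48 * c6 ^ 2 * h ^ 4
        + 48 * c7 ^ 2 * h ^ 4 + 8 * c4 ^ 2 * h ^ 2 := by positivity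
    linarith
  have hc7b : 4 * h ^ 2 * |c7| ≤ s2 := by
    rw [show 4 * h ^ 2 * |c7| = Real.sqrt ((4 * h ^ 2 * |c7|) ^ 2)
      from (Real.sqrt_sq (by positivity)).symm, hs2def]
    apply Real.sqrt_le_sqrt
    rw [mul_pow, mul_pow, sq_abs]
    have hrest : (0:ℝ) ≤ 16 * (c3 + 3 * x1c * c6) ^ 2 * h ^ 2 + 48 * c6 ^ 2 * h ^ 4
        + 16 * (c5 + 3 * x2c * c7) ^ 2 * h ^ 2 + 32 * c7 ^ 2 * h ^ 4 + 8 * c4 ^ 2 * h ^ 2 := by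
      positivity
    linarith
  have hCphi : 2 * |c3 + 3 * x1c * c6| * h ^ 2 + 4 * |c6| * h ^ 3 ≤ 3 / 2 * h * s2 := by
    nlinarith [hA2, hc6b, hh, abs_nonneg (c3 + 3 * x1c * c6), abs_nonneg c6]
  have hCpsi : 2 * |c5 + 3 * x2c * c7| * h ^ 2 + 4 * |c7| * h ^ 3 ≤ 3 / 2 * h * s2 := by
    nlinarith [hB2, hc7b, hh, abs_nonneg (c5 + 3 * x2c * c7), abs_nonneg c7]
  -- assemble
  have hM2nn : 0 ≤ ∫ x in (x1c - h)..(x1c + h), ∫ y in (x2c - h)..(x2c + h), |DD2 u (x, y)| :=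
    double_nonneg (f := fun p => |DD2 u p|) hab hcd (fun p => abs_nonneg _)
  have hM1nn : 0 ≤ ∫ y in (x2c - h)..(x2c + h), ∫ x in (x1c - h)..(x1c + h), |DD1 u (x, y)| :=
    double_nonneg (f := fun p : ℝ × ℝ => |DD1 u (p.2, p.1)|) hcd hab (fun p => abs_nonneg _)
  have hM2b : (∫ x in (x1c - h)..(x1c + h), ∫ y in (x2c - h)..(x2c + h), |DD2 u (x, y)|)
      ≤ 4 * h * s4 := by
    refine hM2.trans ?_
    rw [hsqrtarea]
    calc Real.sqrt (∫ x in (x1c - h)..(x1c + h), ∫ y in (x2c - h)..(x2c + h),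
          (DD2 u (x, y)) ^ 2) * (2 * h) ≤ 2 * s4 * (2 * h) := by
          exact mul_le_mul_of_nonneg_right hsN22 (by positivity)
      _ = 4 * h * s4 := by ring
  have hM1b : (∫ y in (x2c - h)..(x2c + h), ∫ x in (x1c - h)..(x1c + h), |DD1 u (x, y)|)
      ≤ 4 * h * s4 := by
    refine hM1.trans ?_
    rw [hsqrtarea]
    calc Real.sqrt (∫ y in (x2c - h)..(x2c + h), ∫ x in (x1c - h)..(x1c + h),
          (DD1 u (x, y)) ^ 2) * (2 * h) ≤ 2 * s4 * (2 * h) := by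
          exact mul_le_mul_of_nonneg_right hsN21 (by positivity)
      _ = 4 * h * s4 := by ring
  have hT1final : |∫ x in (x1c - h)..(x1c + h), ∫ y in (x2c - h)..(x2c + h),
        gg1 u (x, y) * (2 * (c3 + 3 * x1c * c6) * (x - x1c)
          + c6 * (3 * (x - x1c) ^ 2 - h ^ 2))| ≤ 6 * h ^ 2 * s4 * s2 := by
    rw [hswapT1]
    refine hT1.trans ?_
    calc (2 * |c3 + 3 * x1c * c6| * h ^ 2 + 4 * |c6| * h ^ 3)
          * ∫ y in (x2c - h)..(x2c + h), ∫ x in (x1c - h)..(x1c + h), |DD1 u (x, y)|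
        ≤ (3 / 2 * h * s2) * (4 * h * s4) := by
          apply mul_le_mul hCphi hM1b hM1nn (by positivity)
      _ = 6 * h ^ 2 * s4 * s2 := by ring
  have hT2final : |∫ x in (x1c - h)..(x1c + h), ∫ y in (x2c - h)..(x2c + h),
        gg2 u (x, y) * (2 * (c5 + 3 * x2c * c7) * (y - x2c)
          + c7 * (3 * (y - x2c) ^ 2 - h ^ 2))| ≤ 6 * h ^ 2 * s4 * s2 := by
    refine hT2.trans ?_
    calc (2 * |c5 + 3 * x2c * c7| * h ^ 2 + 4 * |c7| * h ^ 3)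
          * ∫ x in (x1c - h)..(x1c + h), ∫ y in (x2c - h)..(x2c + h), |DD2 u (x, y)|
        ≤ (3 / 2 * h * s2) * (4 * h * s4) := by
          apply mul_le_mul hCpsi hM2b hM2nn (by positivity)
      _ = 6 * h ^ 2 * s4 * s2 := by ring
  rw [hLHS, hsplit, hsemi4, hsemi2]
  refine le_trans (abs_add_le _ _) ?_
  have hfin := add_le_add hT1final hT2final
  nlinarith [hfin, hs2nn, hs4nn, mul_nonneg hs4nn hs2nn, sq_nonneg h]
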